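/- arXiv:1407.1647 — 2 statements merged into one kernel-verified Lean document; each statement's English description precedes it below -/
import Mathlib

section
/- In a finite reachability game, Player 1 has a memoryless winning strategy on W₁ = V \ W₀: there is a function τ : V₁ → V choosing an edge-successor for each v ∈ V₁ ∩ W₁ with a successor, such that every play starting in W₁ in which Player 1 follows τ never visits F (plays may also terminate in a dead-end belonging to Player 0, in which case Player 1 also wins). -/
/-- A reachability game: a digraph on `V` with Player 0's vertices `V0`
(Player 1 owns the complement), edge relation `E`, and target set `F`.
Player 0 wins a play iff it visits `F`. -/
structure RGame (V : Type*) where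
  V0 : Set V
  E : V → V → Prop
  F : Set V

namespace RGame

variable {V : Type*}

/-- `v` has at least one successor. -/
def hasSucc (g : RGame V) (v : V) : Prop := ∃ u, g.E v u

/-- A (possibly finite) play, encoded as `p : ℕ → Option V`: once `none`, always `none`;
the play stops exactly at dead-ends, and consecutive positions are joined by edges. -/
def IsPlay (g : RGame V) (p : ℕ → Option V) : Prop :=
  ∀ n, (p n = none → p (n + 1) = none) ∧
    ∀ w, p n = some w →
      ((¬g.hasSucc w → p (n + 1) = none) ∧
       (g.hasSucc w → ∃ u, p (n + 1) = some u) ∧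
       (∀ u, p (n + 1) = some u → g.E w u))

/-- The history (list of positions) of the play up to and including time `n`. -/
def histUpTo (p : ℕ → Option V) (n : ℕ) : List V :=
  (List.range (n + 1)).filterMap p

/-- Legality of a (history-dependent) strategy: it always chooses an edge-successor
of the current vertex whenever one exists. -/
def LegalStrat (g : RGame V) (σ : V → List V → V) : Prop :=
  ∀ w h, g.hasSucc w → g.E w (σ w h)

/-- The play `p` is consistent with Player 0 using strategy `σ`. -/
def Cons0 (g : RGame V) (σ : V → List V → V) (p : ℕ → Option V) : Prop :=
  ∀ n w, p n = some w → w ∈ g.V0 → g.hasSucc w → p (n + 1) = some (σ w (histUpTo p n))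

/-- The play `p` is consistent with Player 1 using strategy `τ`. -/
def Cons1 (g : RGame V) (τ : V → List V → V) (p : ℕ → Option V) : Prop :=
  ∀ n w, p n = some w → w ∉ g.V0 → g.hasSucc w → p (n + 1) = some (τ w (histUpTo p n))

/-- Legality of a memoryless strategy. -/
def LegalStratM (g : RGame V) (σ : V → V) : Prop :=
  ∀ w, g.hasSucc w → g.E w (σ w)

/-- Consistency of a play with Player 0 using a memoryless strategy. -/
def Cons0M (g : RGame V) (σ : V → V) (p : ℕ → Option V) : Prop :=
  ∀ n w, p n = some w → w ∈ g.V0 → g.hasSucc w → p (n + 1) = some (σ w)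

/-- Consistency of a play with Player 1 using a memoryless strategy. -/
def Cons1M (g : RGame V) (τ : V → V) (p : ℕ → Option V) : Prop :=
  ∀ n w, p n = some w → w ∉ g.V0 → g.hasSucc w → p (n + 1) = some (τ w)

/-- The play visits the target set `F`. -/
def Visits (g : RGame V) (p : ℕ → Option V) : Prop :=
  ∃ n w, p n = some w ∧ w ∈ g.F

/-- Player 0 has a winning strategy from `v`: some legal strategy forcing every
consistent play starting at `v` to visit `F`. -/
def Win0From (g : RGame V) (v : V) : Prop :=
  ∃ σ : V → List V → V, g.LegalStrat σ ∧
    ∀ p : ℕ → Option V, g.IsPlay p → p 0 = some v → g.Cons0 σ p → g.Visits p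

/-- Player 1 has a winning strategy from `v`: some legal strategy such that no
consistent play starting at `v` ever visits `F`. -/
def Win1From (g : RGame V) (v : V) : Prop :=
  ∃ τ : V → List V → V, g.LegalStrat τ ∧
    ∀ p : ℕ → Option V, g.IsPlay p → p 0 = some v → g.Cons1 τ p → ¬g.Visits p

/-- The attractor sets: `attr 0 = F`, and `attr (n+1)` additionally contains the
Player-0 vertices with some successor in `attr n` and the Player-1 vertices having
a successor and all successors in `attr n`. -/
def attr (g : RGame V) : ℕ → Set V
  | 0 => g.F
  | n + 1 =>
      g.attr n ∪ {v | v ∈ g.V0 ∧ ∃ u, g.E v u ∧ u ∈ g.attr n}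
        ∪ {v | v ∉ g.V0 ∧ g.hasSucc v ∧ ∀ u, g.E v u → u ∈ g.attr n}

end RGame

namespace RGame

variable {V : Type*}

-- auxiliary
open Classical in
noncomputable def sdef (g : RGame V) : V → V := fun w =>
  if h : g.hasSucc w then h.choose else w

lemma sdef_legal (g : RGame V) (w : V) (h : g.hasSucc w) : g.E w (g.sdef w) := by
  classical
  unfold sdef
  rw [dif_pos h]
  exact h.choose_spec

lemma shift_isPlay {g : RGame V} {p : ℕ → Option V} (h : g.IsPlay p) :
    g.IsPlay (fun n => p (n + 1)) := fun n => h (n + 1)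

lemma histUpTo_zero {p : ℕ → Option V} {v : V} (h0 : p 0 = some v) :
    histUpTo p 0 = [v] := by
  simp [histUpTo, List.range_succ, List.filterMap_cons, h0]

lemma histUpTo_succ {p : ℕ → Option V} {v : V} (h0 : p 0 = some v) (n : ℕ) :
    histUpTo p (n + 1) = v :: histUpTo (fun k => p (k + 1)) n := by
  unfold histUpTo
  rw [List.range_succ_eq_map, List.filterMap_cons, h0, List.filterMap_map]
  rfl

lemma histUpTo_head {p : ℕ → Option V} {v : V} (h0 : p 0 = some v) (n : ℕ) :
    ∃ t, histUpTo p n = v :: t := by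
  cases n with
  | zero => exact ⟨[], histUpTo_zero h0⟩
  | succ m => exact ⟨_, histUpTo_succ h0 m⟩

def glue (σfam : V → V → List V → V) (d : V → List V → V) : V → List V → V :=
  fun w h => match h with
  | _ :: b :: t => σfam b w (b :: t)
  | _ => d w h

@[simp] lemma glue_cons2 (σfam : V → V → List V → V) (d : V → List V → V)
    (w a b : V) (t : List V) : glue σfam d w (a :: b :: t) = σfam b w (b :: t) := rfl

@[simp] lemma glue_one (σfam : V → V → List V → V) (d : V → List V → V)
    (w a : V) : glue σfam d w [a] = d w [a] := rfl

@[simp] lemma glue_nil (σfam : V → V → List V → V) (d : V → List V → V)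
    (w : V) : glue σfam d w [] = d w [] := rfl

lemma cons0_shift {g : RGame V} {σ σu : V → List V → V} {p : ℕ → Option V} {v u : V}
    (h0 : p 0 = some v) (h1 : p 1 = some u)
    (hcompat : ∀ w t, σ w (v :: u :: t) = σu w (u :: t))
    (hc : g.Cons0 σ p) : g.Cons0 σu (fun k => p (k + 1)) := by
  intro n w hw hw0 hs
  have h := hc (n + 1) w hw hw0 hs
  rw [histUpTo_succ h0] at h
  obtain ⟨t, ht⟩ := histUpTo_head (p := fun k => p (k + 1)) h1 n
  rw [ht] at h ⊢
  rw [hcompat] at h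
  exact h



lemma winF {g : RGame V} {v : V} (hv : v ∈ g.F) : g.Win0From v :=
  ⟨fun w _ => g.sdef w, fun w _ hs => g.sdef_legal w hs,
   fun _ _ h0 _ => ⟨0, v, h0, hv⟩⟩

-- winning strategy family: a legal strategy that wins from `b` whenever possible
open Classical in
noncomputable def sfam (g : RGame V) : V → V → List V → V := fun b =>
  if hb : g.Win0From b then hb.choose else fun w _ => g.sdef w

lemma sfam_legal (g : RGame V) (b : V) : g.LegalStrat (g.sfam b) := by
  classical
  unfold sfam
  by_cases hb : g.Win0From b
  · rw [dif_pos hb]; exact hb.choose_spec.1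
  · rw [dif_neg hb]; exact fun w _ hs => g.sdef_legal w hs

lemma sfam_win (g : RGame V) {b : V} (hb : g.Win0From b) :
    ∀ p : ℕ → Option V, g.IsPlay p → p 0 = some b → g.Cons0 (g.sfam b) p → g.Visits p := by
  classical
  unfold sfam
  rw [dif_pos hb]
  exact hb.choose_spec.2

lemma visits_shift {g : RGame V} {p : ℕ → Option V}
    (h : g.Visits (fun k => p (k + 1))) : g.Visits p := by
  obtain ⟨n, w, hn, hw⟩ := h
  exact ⟨n + 1, w, hn, hw⟩

/-- win0 step at a player-0 vertex -/
lemma win0_step {g : RGame V} {v u : V} (hv : v ∈ g.V0) (he : g.E v u)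
    (hu : g.Win0From u) : g.Win0From v := by
  classical
  refine ⟨glue g.sfam (fun w _ => if w = v then u else g.sdef w), ?_, ?_⟩
  · intro w h hs
    match h with
    | a :: b :: t => exact g.sfam_legal b w (b :: t) hs
    | [a] =>
      rw [glue_one]
      by_cases hw : w = v
      · rw [if_pos hw, hw]; exact he
      · rw [if_neg hw]; exact g.sdef_legal w hs
    | [] =>
      rw [glue_nil]
      by_cases hw : w = v
      · rw [if_pos hw, hw]; exact he
      · rw [if_neg hw]; exact g.sdef_legal w hs
  · intro p hp h0 hc
    have hs : g.hasSucc v := ⟨u, he⟩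
    have h1 : p 1 = some u := by
      have := hc 0 v h0 hv hs
      rw [histUpTo_zero h0, glue_one, if_pos rfl] at this
      exact this
    have hsh : g.Cons0 (g.sfam u) (fun k => p (k + 1)) :=
      cons0_shift h0 h1 (fun w t => glue_cons2 _ _ w v u t) hc
    exact visits_shift (g.sfam_win hu _ (shift_isPlay hp) h1 hsh)

/-- win0 step at a player-1 vertex -/
lemma win1_step {g : RGame V} {v : V} (hv : v ∉ g.V0) (hs : g.hasSucc v)
    (hall : ∀ u, g.E v u → g.Win0From u) : g.Win0From v := by
  classical
  refine ⟨glue g.sfam (fun w _ => g.sdef w), ?_, ?_⟩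
  · intro w h hws
    match h with
    | a :: b :: t => exact g.sfam_legal b w (b :: t) hws
    | [a] => rw [glue_one]; exact g.sdef_legal w hws
    | [] => rw [glue_nil]; exact g.sdef_legal w hws
  · intro p hp h0 hc
    obtain ⟨u, h1⟩ := ((hp 0).2 v h0).2.1 hs
    have he : g.E v u := ((hp 0).2 v h0).2.2 u h1
    have hsh : g.Cons0 (g.sfam u) (fun k => p (k + 1)) :=
      cons0_shift h0 h1 (fun w t => glue_cons2 _ _ w v u t) hc
    exact visits_shift (g.sfam_win (hall u he) _ (shift_isPlay hp) h1 hsh)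

/-- contrapositive forms -/
lemma notWin0_succ1 {g : RGame V} {v : V} (hv : v ∉ g.V0) (hnw : ¬g.Win0From v)
    (hs : g.hasSucc v) : ∃ u, g.E v u ∧ ¬g.Win0From u := by
  by_contra h
  push_neg at h
  exact hnw (win1_step hv hs h)

lemma notWin0_succ0 {g : RGame V} {v u : V} (hv : v ∈ g.V0) (hnw : ¬g.Win0From v)
    (he : g.E v u) : ¬g.Win0From u := fun hu => hnw (win0_step hv he hu)


-- the memoryless strategy for Player 1
open Classical in
noncomputable def tau (g : RGame V) : V → V := fun v =>
  if h : v ∉ g.V0 ∧ ¬g.Win0From v ∧ g.hasSucc v then (notWin0_succ1 h.1 h.2.1 h.2.2).choose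
  else g.sdef v

lemma tau_spec {g : RGame V} {v : V} (h1 : v ∉ g.V0) (h2 : ¬g.Win0From v)
    (h3 : g.hasSucc v) : g.E v (g.tau v) ∧ ¬g.Win0From (g.tau v) := by
  classical
  unfold tau
  rw [dif_pos ⟨h1, h2, h3⟩]
  exact (notWin0_succ1 h1 h2 h3).choose_spec

end RGame

/-- In a finite reachability game, Player 1 has a memoryless winning
strategy on `W₁ = V \ W₀`: a function `τ` choosing an edge-successor at each
Player-1 vertex of `W₁` having a successor, such that no play starting in `W₁` in
which Player 1 follows `τ` ever visits `F` (plays may terminate at a Player-0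
dead-end, in which case Player 1 also wins). -/
theorem memoryless_winning_strategy_player1 {V : Type*} [Fintype V] (g : RGame V) :
    ∃ τ : V → V,
      (∀ v : V, v ∉ g.V0 → ¬g.Win0From v → g.hasSucc v → g.E v (τ v)) ∧
      ∀ v : V, ¬g.Win0From v →
        ∀ p : ℕ → Option V, g.IsPlay p → p 0 = some v → g.Cons1M τ p → ¬g.Visits p := by
  refine ⟨g.tau, fun v h1 h2 h3 => (RGame.tau_spec h1 h2 h3).1, ?_⟩
  intro v hnw p hp h0 hc hvis
  have key : ∀ n, ∀ w, p n = some w → ¬g.Win0From w := by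
    intro n
    induction n with
    | zero =>
      intro w hw
      rw [h0] at hw
      injection hw with h'
      rw [← h']
      exact hnw
    | succ n ih =>
      intro w hw
      cases hpn : p n with
      | none =>
        rw [(hp n).1 hpn] at hw
        exact absurd hw (by simp)
      | some w' =>
        have hnw' := ih w' hpn
        have hs' : g.hasSucc w' := by
          by_contra hns
          rw [((hp n).2 w' hpn).1 hns] at hw
          exact absurd hw (by simp)
        by_cases hw0 : w' ∈ g.V0
        · exact RGame.notWin0_succ0 hw0 hnw' (((hp n).2 w' hpn).2.2 w hw)
        · have hstep := hc n w' hpn hw0 hs'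
          rw [hstep] at hw
          injection hw with h'
          rw [← h']
          exact (RGame.tau_spec hw0 hnw' hs').2
  obtain ⟨n, w, hn, hwF⟩ := hvis
  exact key n w hn (RGame.winF hwF)
end

section
/- Converse boundedness (Zermelo's 1927 argument): in a finite-position alternating game, if from position p₀ White cannot win within any fixed bound n (i.e., for every n, Black can avoid the target for n moves), then Black can avoid the target forever, i.e., White cannot force a win from p₀ at all. -/
namespace RGame

variable {V : Type*}

lemma attr_succ_eq (g : RGame V) (n : ℕ) :
    g.attr (n + 1) =
      g.attr n ∪ {v | v ∈ g.V0 ∧ ∃ u, g.E v u ∧ u ∈ g.attr n}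
        ∪ {v | v ∉ g.V0 ∧ g.hasSucc v ∧ ∀ u, g.E v u → u ∈ g.attr n} := rfl

lemma attr_mono (g : RGame V) {m n : ℕ} (h : m ≤ n) : g.attr m ⊆ g.attr n := by
  induction h with
  | refl => exact fun _ hv => hv
  | step _ ih =>
    exact fun v hv => by rw [attr_succ_eq]; exact Or.inl (Or.inl (ih hv))

open scoped Classical in
/-- White's memoryless attractor strategy. -/
noncomputable def wstrat (g : RGame V) (v : V) : V :=
  if h : ∃ n, ∃ u, g.E v u ∧ u ∈ g.attr n then (Nat.find_spec h).choose
  else if h2 : g.hasSucc v then h2.choose else v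

lemma wstrat_mem (g : RGame V) {v : V} {n : ℕ} (h : ∃ u, g.E v u ∧ u ∈ g.attr n) :
    g.E v (g.wstrat v) ∧ g.wstrat v ∈ g.attr n := by
  classical
  have hex : ∃ n, ∃ u, g.E v u ∧ u ∈ g.attr n := ⟨n, h⟩
  have hspec := (Nat.find_spec hex).choose_spec
  have hle : Nat.find hex ≤ n := Nat.find_min' hex h
  rw [wstrat, dif_pos hex]
  exact ⟨hspec.1, g.attr_mono hle hspec.2⟩

lemma wstrat_legal (g : RGame V) : g.LegalStrat (fun w _ => g.wstrat w) := by
  classical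
  intro w _ hs
  by_cases hex : ∃ n, ∃ u, g.E w u ∧ u ∈ g.attr n
  · simp only [wstrat, dif_pos hex]
    exact (Nat.find_spec hex).choose_spec.1
  · simp only [wstrat, dif_neg hex, dif_pos hs]
    exact hs.choose_spec

/-- If at time `t` the play is at a vertex of `attr n` and White plays `wstrat`,
then the target is visited within `n` more steps. -/
lemma attr_win (g : RGame V) (p : ℕ → Option V) (hp : g.IsPlay p)
    (hc : g.Cons0 (fun w _ => g.wstrat w) p) :
    ∀ n t v, p t = some v → v ∈ g.attr n →
      ∃ m ≤ n, ∃ w, p (t + m) = some w ∧ w ∈ g.F := by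
  intro n
  induction n with
  | zero =>
    intro t v hv hf
    exact ⟨0, le_refl 0, v, hv, hf⟩
  | succ n ih =>
    intro t v hv hmem
    rw [attr_succ_eq] at hmem
    rcases hmem with (hmem | hmem) | hmem
    · obtain ⟨m, hm, w, hw, hwF⟩ := ih t v hv hmem
      exact ⟨m, hm.trans (Nat.le_succ n), w, hw, hwF⟩
    · obtain ⟨hV0, u, hu, huA⟩ := hmem
      have hs : g.hasSucc v := ⟨u, hu⟩
      have hstep : p (t + 1) = some (g.wstrat v) := hc t v hv hV0 hs
      have hmemw : g.wstrat v ∈ g.attr n := (g.wstrat_mem ⟨u, hu, huA⟩).2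
      obtain ⟨m, hm, w, hw, hwF⟩ := ih (t + 1) _ hstep hmemw
      refine ⟨m + 1, by omega, w, ?_, hwF⟩
      have : t + (m + 1) = t + 1 + m := by omega
      rw [this]; exact hw
    · obtain ⟨hV0, hs, hall⟩ := hmem
      obtain ⟨u, hu⟩ := ((hp t).2 v hv).2.1 hs
      have hEu : g.E v u := ((hp t).2 v hv).2.2 u hu
      obtain ⟨m, hm, w, hw, hwF⟩ := ih (t + 1) u hu (hall u hEu)
      refine ⟨m + 1, by omega, w, ?_, hwF⟩
      have : t + (m + 1) = t + 1 + m := by omega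
      rw [this]; exact hw

/-- The attractor region. -/
def Attr (g : RGame V) : Set V := {v | ∃ n, v ∈ g.attr n}

lemma escape_V0 (g : RGame V) {w : V} (hw : w ∉ g.Attr) (hV0 : w ∈ g.V0) :
    ∀ u, g.E w u → u ∉ g.Attr := by
  rintro u hu ⟨n, hn⟩
  exact hw ⟨n + 1, by rw [attr_succ_eq]; exact Or.inl (Or.inr ⟨hV0, u, hu, hn⟩)⟩

lemma escape_V1 [Fintype V] (g : RGame V) {w : V} (hw : w ∉ g.Attr) (hV0 : w ∉ g.V0)
    (hs : g.hasSucc w) : ∃ u, g.E w u ∧ u ∉ g.Attr := by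
  classical
  by_contra hcon
  push_neg at hcon
  set f : V → ℕ := fun u => if h : ∃ n, u ∈ g.attr n then Nat.find h else 0 with hf
  set N : ℕ := Finset.univ.sup f with hN
  have hall : ∀ u, g.E w u → u ∈ g.attr N := by
    intro u hu
    have hA : ∃ n, u ∈ g.attr n := hcon u hu
    have h1 : u ∈ g.attr (f u) := by simp only [hf, dif_pos hA]; exact Nat.find_spec hA
    exact g.attr_mono (Finset.le_sup (Finset.mem_univ u)) h1
  exact hw ⟨N + 1, by rw [attr_succ_eq]; exact Or.inr ⟨hV0, hs, hall⟩⟩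

open scoped Classical in
/-- Black's escaping choice. -/
noncomputable def bstrat (g : RGame V) (w : V) : V :=
  if h : ∃ u, g.E w u ∧ u ∉ g.Attr then h.choose
  else if h2 : g.hasSucc w then h2.choose else w

lemma bstrat_edge (g : RGame V) {w : V} (hs : g.hasSucc w) : g.E w (g.bstrat w) := by
  classical
  by_cases hex : ∃ u, g.E w u ∧ u ∉ g.Attr
  · simp only [bstrat, dif_pos hex]; exact hex.choose_spec.1
  · simp only [bstrat, dif_neg hex, dif_pos hs]; exact hs.choose_spec

lemma bstrat_escape [Fintype V] (g : RGame V) {w : V} (hw : w ∉ g.Attr) (hV0 : w ∉ g.V0)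
    (hs : g.hasSucc w) : g.bstrat w ∉ g.Attr := by
  classical
  have hex : ∃ u, g.E w u ∧ u ∉ g.Attr := g.escape_V1 hw hV0 hs
  simp only [bstrat, dif_pos hex]
  exact hex.choose_spec.2

open scoped Classical in
/-- Build the play: White moves with `σ`, Black with `bstrat`. The second component
tracks the history. -/
noncomputable def build (g : RGame V) (σ : V → List V → V) (p0 : V) :
    ℕ → Option V × List V
  | 0 => (some p0, [p0])
  | n + 1 =>
    match build g σ p0 n with
    | (none, h) => (none, h)
    | (some w, h) =>
      if g.hasSucc w then
        let u := if w ∈ g.V0 then σ w h else g.bstrat w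
        (some u, h ++ [u])
      else (none, h)

lemma histUpTo_succ_s10 (p : ℕ → Option V) (n : ℕ) :
    histUpTo p (n + 1) = histUpTo p n ++ (p (n + 1)).toList := by
  unfold histUpTo
  rw [List.range_succ, List.filterMap_append]
  cases hp : p (n + 1) <;> simp [hp]

lemma build_hist (g : RGame V) (σ : V → List V → V) (p0 : V) :
    ∀ n, histUpTo (fun k => (g.build σ p0 k).1) n = (g.build σ p0 n).2 := by
  intro n
  induction n with
  | zero => simp [histUpTo, List.range_succ, build]
  | succ n ih =>
    rw [histUpTo_succ_s10, ih]
    rcases hb : g.build σ p0 n with ⟨ow, hl⟩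
    rcases ow with _ | w
    · simp [build, hb]
    · by_cases hs : g.hasSucc w <;> simp [build, hb, hs]

theorem unbounded_implies_no_win' {V : Type*} [Fintype V] (g : RGame V) (p0 : V)
    (h : ∀ n : ℕ, ¬∃ σ : V → List V → V, g.LegalStrat σ ∧
        ∀ p : ℕ → Option V, g.IsPlay p → p 0 = some p0 → g.Cons0 σ p →
          ∃ m ≤ n, ∃ w, p m = some w ∧ w ∈ g.F) :
    ¬g.Win0From p0 := by
  classical
  -- p0 is not in any attractor level
  have hp0 : p0 ∉ g.Attr := by
    rintro ⟨n, hn⟩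
    apply h n
    refine ⟨fun w _ => g.wstrat w, g.wstrat_legal, fun p hp h0 hc => ?_⟩
    obtain ⟨m, hm, w, hw, hwF⟩ := g.attr_win p hp hc n 0 p0 h0 hn
    exact ⟨m, hm, w, by simpa using hw, hwF⟩
  rintro ⟨σ, hleg, hwin⟩
  set p : ℕ → Option V := fun k => (g.build σ p0 k).1 with hpdef
  have hp0some : p 0 = some p0 := rfl
  -- analyze one step of build
  have hstep : ∀ n w, p n = some w →
      (¬g.hasSucc w → p (n + 1) = none) ∧
      (g.hasSucc w → p (n + 1) =
        some (if w ∈ g.V0 then σ w (g.build σ p0 n).2 else g.bstrat w)) := by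
    intro n w hw
    rcases hb : g.build σ p0 n with ⟨ow, hl⟩
    have how : ow = some w := by rw [hpdef] at hw; simp [hb] at hw; exact hw
    subst how
    constructor
    · intro hns; simp [hpdef, build, hb, hns]
    · intro hs; simp [hpdef, build, hb, hs]
  have hnone : ∀ n, p n = none → p (n + 1) = none := by
    intro n hn
    rcases hb : g.build σ p0 n with ⟨ow, hl⟩
    have how : ow = none := by rw [hpdef] at hn; simp [hb] at hn; exact hn
    subst how
    simp [hpdef, build, hb]
  -- the play avoids the attractor region
  have hinv : ∀ n w, p n = some w → w ∉ g.Attr := by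
    intro n
    induction n with
    | zero => intro w hw; rw [hp0some] at hw; injection hw with hw; rwa [← hw]
    | succ n ih =>
      intro w hw
      rcases hq : p n with _ | v
      · rw [hnone n hq] at hw; exact absurd hw (by simp)
      · have hvA : v ∉ g.Attr := ih v hq
        by_cases hs : g.hasSucc v
        · have := (hstep n v hq).2 hs
          rw [this] at hw; injection hw with hw; rw [← hw]
          by_cases hV0 : v ∈ g.V0
          · simp only [if_pos hV0]
            exact g.escape_V0 hvA hV0 _ (hleg v _ hs)
          · simp only [if_neg hV0]
            exact g.bstrat_escape hvA hV0 hs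
        · rw [(hstep n v hq).1 hs] at hw; exact absurd hw (by simp)
  -- it is a play
  have hisplay : g.IsPlay p := by
    intro n
    refine ⟨hnone n, fun w hw => ?_⟩
    refine ⟨(hstep n w hw).1, fun hs => ⟨_, (hstep n w hw).2 hs⟩, ?_⟩
    intro u hu
    by_cases hs : g.hasSucc w
    · have := (hstep n w hw).2 hs
      rw [this] at hu; injection hu with hu; rw [← hu]
      by_cases hV0 : w ∈ g.V0
      · simp only [if_pos hV0]; exact hleg w _ hs
      · simp only [if_neg hV0]; exact g.bstrat_edge hs
    · rw [(hstep n w hw).1 hs] at hu; exact absurd hu (by simp)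
  -- it is consistent with White's strategy σ
  have hcons : g.Cons0 σ p := by
    intro n w hw hV0 hs
    have := (hstep n w hw).2 hs
    rw [this, if_pos hV0, ← g.build_hist σ p0 n]
  -- contradiction: the play visits F but avoids the attractor
  obtain ⟨m, w, hw, hwF⟩ := hwin p hisplay hp0some hcons
  exact hinv m w hw ⟨0, hwF⟩

end RGame

/-- Converse boundedness, Zermelo 1927: in a finite-position game, if
for every bound `n` White has no strategy forcing the target within `n` moves from
`p₀`, then White cannot force a win from `p₀` at all. -/
theorem unbounded_implies_no_win {V : Type*} [Fintype V] (g : RGame V) (p0 : V)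
    (h : ∀ n : ℕ, ¬∃ σ : V → List V → V, g.LegalStrat σ ∧
        ∀ p : ℕ → Option V, g.IsPlay p → p 0 = some p0 → g.Cons0 σ p →
          ∃ m ≤ n, ∃ w, p m = some w ∧ w ∈ g.F) :
    ¬g.Win0From p0 := by
  exact RGame.unbounded_implies_no_win' g p0 h
end
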